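/- Consider the birth-and-death chain on {0,...,n} with transition probabilities p_{i,i+1} = (n−i)/(n−i+iλ) and p_{i+1,i} = (i+1)λ/(n−i−1+(i+1)λ). Its stationary distribution π satisfies π(i) = (C(n−1,i−1)λ^{−(i−1)} + C(n−1,i)λ^{−i})·π(0) for all i ∈ {0,...,n}, and consequently π(0) ≥ (1/2)(1+1/λ)^{−n} whenever λ ≥ n. -/

import Mathlib

/-- for the birth-and-death chain on `{0, ..., n}` with
`p_{i,i+1} = (n−i)/(n−i+iλ)` and `p_{i+1,i} = (i+1)λ/(n−i−1+(i+1)λ)`, the stationary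
distribution (characterized by detailed balance and normalization) satisfies
`π(i) = (C(n−1,i−1)·λ^{−(i−1)} + C(n−1,i)·λ^{−i})·π(0)` (with `C(n−1,−1) = 0`),
and consequently `π(0) ≥ (1/2)·(1+1/λ)^{−n}` when `λ ≥ n`. -/
theorem stmt16 (n : ℕ) (hn : 1 ≤ n) (lam : ℝ) (hlam : (n : ℝ) ≤ lam)
    (π : ℕ → ℝ) (hpos : ∀ i, 0 ≤ π i)
    (hsum : ∑ i ∈ Finset.range (n + 1), π i = 1)
    (hdb : ∀ i < n,
      π i * (((n : ℝ) - i) / ((n : ℝ) - i + i * lam))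
        = π (i + 1) * ((((i : ℝ) + 1) * lam) / ((n : ℝ) - i - 1 + ((i : ℝ) + 1) * lam))) :
    (∀ i ≤ n,
      π i = ((if i = 0 then 0 else ((n - 1).choose (i - 1) : ℝ) * lam ^ (1 - (i : ℤ)))
              + ((n - 1).choose i : ℝ) * lam ^ (-(i : ℤ))) * π 0) ∧
    (1 / 2 : ℝ) * (1 + 1 / lam) ^ (-(n : ℤ)) ≤ π 0 := by
  obtain ⟨m, rfl⟩ : ∃ m, n = m + 1 := ⟨n - 1, (Nat.succ_pred_eq_of_pos hn).symm⟩
  have hlam1 : (1:ℝ) ≤ lam := le_trans (by exact_mod_cast hn) hlam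
  have hlam0 : (0:ℝ) < lam := lt_of_lt_of_le one_pos hlam1
  have hlamne : lam ≠ 0 := ne_of_gt hlam0
  simp only [Nat.add_sub_cancel] at *
  have key : ∀ i ≤ m + 1, π i =
      ((if i = 0 then 0 else (m.choose (i - 1) : ℝ) * lam ^ (1 - (i : ℤ)))
        + (m.choose i : ℝ) * lam ^ (-(i : ℤ))) * π 0 := by
    intro i hi
    induction i with
    | zero => simp
    | succ i ih =>
      have hi' : i < m + 1 := hi
      have ihe := ih hi'.le
      have him : i ≤ m := Nat.lt_succ_iff.mp hi'
      have hIn : (i:ℝ) ≤ m := by exact_mod_cast him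
      have hD1 : (0:ℝ) < ((m:ℝ)+1) - i + i * lam := by
        have : (0:ℝ) ≤ i * lam := by positivity
        linarith
      have hD2 : (0:ℝ) < ((m:ℝ)+1) - i - 1 + ((i:ℝ)+1) * lam := by
        have : (0:ℝ) < ((i:ℝ)+1) * lam := by positivity
        linarith
      have hdbi := hdb i hi'
      push_cast at hdbi ⊢
      -- abbreviations
      set P : ℝ := lam ^ (-(i:ℤ)) with hP
      have hPne : P ≠ 0 := zpow_ne_zero _ hlamne
      have e1 : lam ^ (1 - (i:ℤ)) = lam * P := by
        rw [hP, sub_eq_add_neg, zpow_add₀ hlamne, zpow_one]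
      have e2 : lam ^ (1 - ((i:ℤ)+1)) = P := by
        rw [hP]; congr 1; ring
      have e3 : lam ^ (-((i:ℤ)+1)) = P * lam⁻¹ := by
        rw [hP, ← zpow_neg_one, ← zpow_add₀ hlamne]; congr 1; ring
      set a : ℝ := if i = 0 then (0:ℝ) else (m.choose (i-1) : ℝ) with ha
      set b : ℝ := (m.choose i : ℝ) with hb
      set c : ℝ := (m.choose (i+1) : ℝ) with hc
      have h1 : ((m:ℝ) - i) * b = ((i:ℝ)+1) * c := by
        have := Nat.choose_succ_right_eq m i
        have hcast : ((m - i : ℕ) : ℝ) = (m:ℝ) - i :=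
          Nat.cast_sub him
        rw [hb, hc]
        have : (m.choose (i+1) * (i+1) : ℕ) = (m.choose i * (m - i) : ℕ) := this
        have := congrArg (Nat.cast (R := ℝ)) this
        push_cast at this
        rw [hcast] at this
        linarith
      have h2 : (((m:ℝ)+1) - i) * a = (i:ℝ) * b := by
        rcases Nat.eq_zero_or_pos i with rfl | hip
        · simp [ha]
        · obtain ⟨j, rfl⟩ := Nat.exists_eq_succ_of_ne_zero hip.ne'
          have hjm : j ≤ m := Nat.le_of_succ_le him
          have := Nat.choose_succ_right_eq m j
          have := congrArg (Nat.cast (R := ℝ)) this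
          push_cast at this
          have hcast : ((m - j : ℕ) : ℝ) = (m:ℝ) - j :=
            Nat.cast_sub hjm
          rw [hcast] at this
          simp only [ha, hb, if_neg (Nat.succ_ne_zero j), Nat.succ_sub_one]
          push_cast
          linarith
      have ihe2 : π i = (a * lam + b) * P * π 0 := by
        rw [ihe]
        rcases eq_or_ne i 0 with rfl | h0
        · simp [ha]
        · rw [if_neg h0, e1, ha, if_neg h0]; ring
      have hpoly : (a * lam + b) * ((m:ℝ) + 1 - i) * ((m:ℝ) + 1 - i - 1 + ((i:ℝ) + 1) * lam)
          = (b * lam + c) * ((i:ℝ) + 1) * ((m:ℝ) + 1 - i + (i:ℝ) * lam) := by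
        linear_combination (lam * ((m:ℝ) - i) + lam ^ 2 * ((i:ℝ) + 1)) * h2
          + (lam * (i:ℝ) + ((m:ℝ) + 1 - i)) * h1
      have hB : ((i:ℝ) + 1) * lam / ((m:ℝ) + 1 - i - 1 + ((i:ℝ) + 1) * lam) ≠ 0 :=
        ne_of_gt (div_pos (by positivity) hD2)
      have hπs : π (i + 1)
          = π i * (((m:ℝ) + 1 - i) / ((m:ℝ) + 1 - i + i * lam))
            / (((i:ℝ) + 1) * lam / ((m:ℝ) + 1 - i - 1 + ((i:ℝ) + 1) * lam)) :=
        eq_div_of_mul_eq hB hdbi.symm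
      rw [e2, e3, hπs, ihe2]
      field_simp
      rw [div_eq_iff (by rw [mul_comm]; exact hD1.ne')]
      linear_combination π 0 * hpoly
  refine ⟨key, ?_⟩
  have hB1 : (1:ℝ) ≤ lam⁻¹ + 1 := by
    have : (0:ℝ) < lam⁻¹ := by positivity
    linarith
  have hB0 : (0:ℝ) < lam⁻¹ + 1 := lt_of_lt_of_le one_pos hB1
  have core : ∀ M : ℕ, ∑ i ∈ Finset.range (M + 1), (M.choose i : ℝ) * (lam⁻¹) ^ i
      = (lam⁻¹ + 1) ^ M := by
    intro M
    rw [add_pow]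
    refine Finset.sum_congr rfl fun k _ => ?_
    rw [one_pow]; ring
  have hzp : ∀ i : ℕ, lam ^ (-(i:ℤ)) = (lam⁻¹) ^ i := by
    intro i
    rw [zpow_neg, zpow_natCast, inv_pow]
  have hT : ∑ i ∈ Finset.range (m + 1 + 1), (m.choose i : ℝ) * lam ^ (-(i:ℤ))
      = (lam⁻¹ + 1) ^ m := by
    rw [Finset.sum_range_succ]
    rw [Nat.choose_eq_zero_of_lt (Nat.lt_succ_self m)]
    simp only [Nat.cast_zero, zero_mul, add_zero]
    rw [← core m]
    refine Finset.sum_congr rfl fun i _ => by rw [hzp]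
  have hU : ∑ i ∈ Finset.range (m + 1 + 1),
      (if i = 0 then (0:ℝ) else (m.choose (i-1) : ℝ) * lam ^ (1 - (i:ℤ)))
      = (lam⁻¹ + 1) ^ m := by
    rw [Finset.sum_range_succ']
    simp only [if_pos rfl, if_true, add_zero, if_neg (Nat.succ_ne_zero _), Nat.succ_sub_one]
    norm_num
    rw [← core m]
    refine Finset.sum_congr rfl fun i _ => ?_
    rw [inv_pow]
  have hsum2 : (2 * (lam⁻¹ + 1) ^ m) * π 0 = 1 := by
    have : ∑ i ∈ Finset.range (m + 1 + 1), π i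
        = ∑ i ∈ Finset.range (m + 1 + 1),
            ((if i = 0 then 0 else (m.choose (i-1) : ℝ) * lam ^ (1 - (i:ℤ)))
              + (m.choose i : ℝ) * lam ^ (-(i:ℤ))) * π 0 := by
      refine Finset.sum_congr rfl fun i hi => key i (Nat.lt_succ_iff.mp (Finset.mem_range.mp hi))
    have h3 : (2 * (lam⁻¹ + 1) ^ m) * π 0 = ∑ i ∈ Finset.range (m + 1 + 1), π i := by
      rw [this, ← Finset.sum_mul, Finset.sum_add_distrib, hT, hU]; ring
    exact h3.trans hsum
  have hπ0 : π 0 = (2 * (lam⁻¹ + 1) ^ m)⁻¹ := by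
    exact eq_inv_of_mul_eq_one_right hsum2
  rw [hπ0]
  have hcast : (-((m:ℕ)+1 : ℕ) : ℤ) = -((m:ℤ)+1) := by push_cast; ring
  have hz : (1 + 1/lam) ^ (-(((m+1):ℕ)):ℤ) = ((lam⁻¹+1) ^ (m+1))⁻¹ := by
    rw [zpow_neg, zpow_natCast, one_div, add_comm]
  rw [hz]
  rw [mul_inv]
  have hle : (lam⁻¹ + 1) ^ m ≤ (lam⁻¹ + 1) ^ (m + 1) :=
    pow_le_pow_right₀ hB1 (Nat.le_succ m)
  have h1 : ((lam⁻¹ + 1) ^ (m+1))⁻¹ ≤ ((lam⁻¹ + 1) ^ m)⁻¹ :=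
    inv_anti₀ (by positivity) hle
  have : (1/2 : ℝ) = (2:ℝ)⁻¹ := by norm_num
  rw [this]
  exact mul_le_mul_of_nonneg_left h1 (by norm_num)
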